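/- Let σ, α, μ be real numbers with 0 < σ < 1, 0 < α < 1, σα ≤ μ ≤ σ, μ ≤ α, and α − μ ≤ 1 − σ. Then σ·h(μ/σ) + (1−σ)·h((α−μ)/(1−σ)) − h(α) ≤ −((μ − σα)²/2)·(1/α + 1/(1−α)), where h is the binary entropy function. -/

import Mathlib

open Real Set

set_option maxHeartbeats 1000000 in
private lemma entropy_aux (σ α d : ℝ) (hσ0 : 0 < σ) (hσ1 : σ < 1)
    (hα0 : 0 < α) (hα1 : α < 1) (hd : 0 < d)
    (hdα : σ * α + d ≤ α) (hdσ : σ * α + d ≤ σ) :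
    σ * Real.binEntropy (α + 1 * (d / σ)) +
      (1 - σ) * Real.binEntropy (α - 1 * (d / (1 - σ))) +
      (1 / α + 1 / (1 - α)) * d ^ 2 * 1 ^ 2 / 2
    ≤ σ * Real.binEntropy (α + 0 * (d / σ)) +
      (1 - σ) * Real.binEntropy (α - 0 * (d / (1 - σ))) +
      (1 / α + 1 / (1 - α)) * d ^ 2 * 0 ^ 2 / 2 := by
  have hσ1' : 0 < 1 - σ := by linarith
  have hα1' : 0 < 1 - α := by linarith
  set C : ℝ := 1 / α + 1 / (1 - α) with hC
  set φ : ℝ → ℝ := fun t =>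
    σ * Real.binEntropy (α + t * (d / σ)) +
      (1 - σ) * Real.binEntropy (α - t * (d / (1 - σ))) + C * d ^ 2 * t ^ 2 / 2 with hφ
  have hmain : ∀ t ∈ Ioo (0:ℝ) 1,
      HasDerivAt φ
        (σ * ((Real.log (1 - (α + t * (d / σ))) - Real.log (α + t * (d / σ))) * (d / σ)) +
          (1 - σ) * ((Real.log (1 - (α - t * (d / (1 - σ)))) -
            Real.log (α - t * (d / (1 - σ)))) * (-(d / (1 - σ)))) + C * d ^ 2 * t) t ∧
      (σ * ((Real.log (1 - (α + t * (d / σ))) - Real.log (α + t * (d / σ))) * (d / σ)) +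
          (1 - σ) * ((Real.log (1 - (α - t * (d / (1 - σ)))) -
            Real.log (α - t * (d / (1 - σ)))) * (-(d / (1 - σ)))) + C * d ^ 2 * t) ≤ 0 := by
    intro t ht
    obtain ⟨ht0, ht1⟩ := ht
    set x := α + t * (d / σ) with hx
    set y := α - t * (d / (1 - σ)) with hy
    have hxpos : 0 < x := by
      have : 0 ≤ t * (d / σ) := by positivity
      simp only [hx]; linarith
    have hσx : σ * x ≤ α := by
      have h1 : σ * x = σ * α + t * d := by
        rw [hx]; field_simp
      nlinarith
    have hx1 : x < 1 := by
      have h1 : σ * x = σ * α + t * d := by rw [hx]; field_simp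
      nlinarith
    have hypos : 0 < y := by
      have h1 : (1 - σ) * y = (1 - σ) * α - t * d := by
        rw [hy]; field_simp
      nlinarith
    have hy1 : y < 1 := by
      have : 0 < t * (d / (1 - σ)) := by positivity
      simp only [hy]; linarith
    have hσy : (1 - σ) * (1 - y) ≤ 1 - α := by
      have h1 : (1 - σ) * y = (1 - σ) * α - t * d := by
        rw [hy]; field_simp
      nlinarith
    have hyx : y - x ≤ 0 := by
      have h1 : 0 ≤ t * (d / σ) := by positivity
      have h2 : 0 ≤ t * (d / (1 - σ)) := by positivity
      rw [hx, hy]; linarith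
    constructor
    · have h1 : HasDerivAt (fun s : ℝ => α + s * (d / σ)) (d / σ) t := by
        simpa using ((hasDerivAt_id t).mul_const (d / σ)).const_add α
      have h2 : HasDerivAt (fun s : ℝ => α - s * (d / (1 - σ))) (-(d / (1 - σ))) t := by
        simpa using ((hasDerivAt_id t).mul_const (d / (1 - σ))).const_sub α
      have hbx : HasDerivAt (fun s : ℝ => Real.binEntropy (α + s * (d / σ)))
          ((Real.log (1 - x) - Real.log x) * (d / σ)) t :=
        by have := (Real.hasDerivAt_binEntropy hxpos.ne' hx1.ne).comp t h1; exact this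
      have hby : HasDerivAt (fun s : ℝ => Real.binEntropy (α - s * (d / (1 - σ))))
          ((Real.log (1 - y) - Real.log y) * (-(d / (1 - σ)))) t :=
        by have := (Real.hasDerivAt_binEntropy hypos.ne' hy1.ne).comp t h2; exact this
      have hbt : HasDerivAt (fun s : ℝ => C * d ^ 2 * s ^ 2 / 2) (C * d ^ 2 * t) t := by
        have hp : HasDerivAt (fun s : ℝ => s ^ 2) (2 * t) t := by
          simpa using hasDerivAt_pow 2 t
        have := (hp.const_mul (C * d ^ 2)).div_const 2
        rw [show C * d ^ 2 * t = C * d ^ 2 * (2 * t) / 2 by ring]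
        exact this
      exact ((hbx.const_mul σ).add (hby.const_mul (1 - σ))).add hbt
    · -- the derivative is nonpositive
      have hne : σ ≠ 0 := hσ0.ne'
      have hne' : (1 : ℝ) - σ ≠ 0 := hσ1'.ne'
      have e1 : σ * ((Real.log (1 - x) - Real.log x) * (d / σ))
          = d * (Real.log (1 - x) - Real.log x) := by
        field_simp
      have e2 : (1 - σ) * ((Real.log (1 - y) - Real.log y) * (-(d / (1 - σ))))
          = -(d * (Real.log (1 - y) - Real.log y)) := by
        field_simp
      rw [e1, e2]
      have h1y : 0 < 1 - y := by linarith
      have h1x : 0 < 1 - x := by linarith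
      have hlogA : Real.log y - Real.log x ≤ (y - x) * (1 / x) := by
        have h := Real.log_le_sub_one_of_pos (show 0 < y / x by positivity)
        rw [Real.log_div hypos.ne' hxpos.ne'] at h
        have h2 : y / x - 1 = (y - x) * (1 / x) := by field_simp
        linarith [h2 ▸ h]
      have hlogB : Real.log (1 - x) - Real.log (1 - y) ≤ (y - x) * (1 / (1 - y)) := by
        have h := Real.log_le_sub_one_of_pos (show 0 < (1 - x) / (1 - y) by positivity)
        rw [Real.log_div h1x.ne' h1y.ne'] at h
        have h2 : (1 - x) / (1 - y) - 1 = (y - x) * (1 / (1 - y)) := by field_simp; ring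
        linarith [h2 ▸ h]
      have hinvx : σ / α ≤ 1 / x := by
        rw [div_le_div_iff₀ hα0 hxpos]; linarith
      have hinvy : (1 - σ) / (1 - α) ≤ 1 / (1 - y) := by
        rw [div_le_div_iff₀ hα1' h1y]; linarith
      have hA2 : (y - x) * (1 / x) ≤ (y - x) * (σ / α) :=
        mul_le_mul_of_nonpos_left hinvx hyx
      have hB2 : (y - x) * (1 / (1 - y)) ≤ (y - x) * ((1 - σ) / (1 - α)) :=
        mul_le_mul_of_nonpos_left hinvy hyx
      have hsum : (Real.log (1 - x) - Real.log (1 - y)) + (Real.log y - Real.log x)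
          ≤ (y - x) * ((1 - σ) / (1 - α)) + (y - x) * (σ / α) :=
        add_le_add (hlogB.trans hB2) (hlogA.trans hA2)
      have hmul := mul_le_mul_of_nonneg_left hsum hd.le
      have hyx_eq : y - x = -(t * (d / (1 - σ))) - t * (d / σ) := by
        rw [hx, hy]; ring
      have hEq : d * ((y - x) * ((1 - σ) / (1 - α)) + (y - x) * (σ / α)) + C * d ^ 2 * t
          = -(t * d ^ 2 * σ / ((1 - σ) * α)) - t * d ^ 2 * (1 - σ) / (σ * (1 - α)) := by
        rw [hyx_eq, hC]
        field_simp
        ring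
      have hpos1 : 0 ≤ t * d ^ 2 * σ / ((1 - σ) * α) := by positivity
      have hpos2 : 0 ≤ t * d ^ 2 * (1 - σ) / (σ * (1 - α)) := by positivity
      have hexp : d * (Real.log (1 - x) - Real.log (1 - y) + (Real.log y - Real.log x))
          = d * (Real.log (1 - x) - Real.log x) + -(d * (Real.log (1 - y) - Real.log y)) := by
        ring
      clear_value x y C
      linarith [hmul, hEq, hpos1, hpos2, hexp]
  have hcont : ContinuousOn φ (Icc 0 1) := by
    apply Continuous.continuousOn
    rw [hφ]
    fun_prop
  have hdiff : DifferentiableOn ℝ φ (interior (Icc (0:ℝ) 1)) := by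
    rw [interior_Icc]
    intro t ht
    exact ((hmain t ht).1).differentiableAt.differentiableWithinAt
  have hnonpos : ∀ t ∈ interior (Icc (0:ℝ) 1), deriv φ t ≤ 0 := by
    intro t ht
    rw [interior_Icc] at ht
    rw [(hmain t ht).1.deriv]
    exact (hmain t ht).2
  have hanti : AntitoneOn φ (Icc 0 1) :=
    antitoneOn_of_deriv_nonpos (convex_Icc 0 1) hcont hdiff hnonpos
  have := hanti (show (0:ℝ) ∈ Icc (0:ℝ) 1 by constructor <;> norm_num)
    (show (1:ℝ) ∈ Icc (0:ℝ) 1 by constructor <;> norm_num) zero_le_one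
  simpa [hφ] using this

/-- the second-order entropy estimate used in the proof of
upper bound (b). -/
theorem entropy_second_order_estimate (σ α μ : ℝ) (hσ0 : 0 < σ) (hσ1 : σ < 1)
    (hα0 : 0 < α) (hα1 : α < 1) (hσα : σ * α ≤ μ) (hμσ : μ ≤ σ)
    (hμα : μ ≤ α) (hαμ : α - μ ≤ 1 - σ) :
    σ * Real.binEntropy (μ / σ) + (1 - σ) * Real.binEntropy ((α - μ) / (1 - σ)) -
      Real.binEntropy α
      ≤ -((μ - σ * α) ^ 2 / 2) * (1 / α + 1 / (1 - α)) := by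
  rcases eq_or_lt_of_le hσα with heq | hlt
  · have h1 : μ / σ = α := by rw [← heq]; field_simp
    have h2 : (α - μ) / (1 - σ) = α := by
      rw [← heq, show α - σ * α = (1 - σ) * α by ring]
      exact mul_div_cancel_left₀ α (by linarith : (1:ℝ) - σ ≠ 0)
    rw [h1, h2, ← heq]
    have hz : σ * Real.binEntropy α + (1 - σ) * Real.binEntropy α - Real.binEntropy α = 0 := by
      ring
    have hz2 : -((σ * α - σ * α) ^ 2 / 2) * (1 / α + 1 / (1 - α)) = 0 := by ring
    linarith [hz, hz2]
  · set d := μ - σ * α with hd_def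
    have hd : 0 < d := by simp only [hd_def]; linarith
    have key := entropy_aux σ α d hσ0 hσ1 hα0 hα1 hd (by simp only [hd_def]; linarith)
      (by simp only [hd_def]; linarith)
    have e1 : α + 1 * (d / σ) = μ / σ := by field_simp [hd_def]; ring
    have e2 : α - 1 * (d / (1 - σ)) = (α - μ) / (1 - σ) := by
      have h : (1:ℝ) - σ ≠ 0 := by linarith
      field_simp [hd_def]; ring
    have e3 : α + 0 * (d / σ) = α := by ring
    have e4 : α - 0 * (d / (1 - σ)) = α := by ring
    rw [e1, e2, e3, e4] at key
    nlinarith [key]
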